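/- arXiv:2212.10875 — 2 statements merged into one kernel-verified Lean document; each statement's English description precedes it below -/
import Mathlib

section
/- Pastification correctness for the environment-alternation formula simple_Env(U): for every finite trace σ = ⟨σ_0,…,σ_{n−1}⟩ with n ≥ 1 over a set Σ of propositions and every subset U ⊆ Σ, the forward condition [(∃ u ∈ U, u ∈ σ_0) and ∀ j < n, if (∃ u ∈ U, u ∈ σ_j) then ((∀ u, u' ∈ U with u ≠ u', ¬(u ∈ σ_j ∧ u' ∈ σ_j)) and (j = n−1 or ((∀ u ∈ U, u ∉ σ_{j+1}) and (j = n−2 or ∃ u ∈ U, u ∈ σ_{j+2}))))] holds if and only if the past condition [(∃ u ∈ U, u ∈ σ_0) and ∀ i < n, ((∃ u ∈ U, u ∈ σ_i) → ∀ u, u' ∈ U with u ≠ u', ¬(u ∈ σ_i ∧ u' ∈ σ_i)) and ((i > 0 ∧ ∃ u ∈ U, u ∈ σ_{i−1}) → ∀ u ∈ U, u ∉ σ_i) and ((i > 1 ∧ ∃ u ∈ U, u ∈ σ_{i−2}) → ∃ u ∈ U, u ∈ σ_i)] holds. -/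
/-- Pastification correctness for the environment-alternation formula
`simple_Env(U)`: the forward semantics at position 0 iff the semantics of its
pure-past pastification at the last position `n-1`. -/
theorem simple_env_pastification {α : Type*} (n : ℕ) (hn : 1 ≤ n)
    (σ : ℕ → Set α) (U : Set α) :
    ((∃ u ∈ U, u ∈ σ 0) ∧
     (∀ j, j < n → ((∃ u ∈ U, u ∈ σ j) →
       ((∀ u ∈ U, ∀ u' ∈ U, u ≠ u' → ¬ (u ∈ σ j ∧ u' ∈ σ j)) ∧
        (j = n - 1 ∨
          ((∀ u ∈ U, u ∉ σ (j + 1)) ∧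
           (j = n - 2 ∨ ∃ u ∈ U, u ∈ σ (j + 2)))))))) ↔
    ((∃ u ∈ U, u ∈ σ 0) ∧
     (∀ i, i < n →
       (((∃ u ∈ U, u ∈ σ i) →
          ∀ u ∈ U, ∀ u' ∈ U, u ≠ u' → ¬ (u ∈ σ i ∧ u' ∈ σ i)) ∧
        ((0 < i ∧ ∃ u ∈ U, u ∈ σ (i - 1)) → ∀ u ∈ U, u ∉ σ i) ∧
        ((1 < i ∧ ∃ u ∈ U, u ∈ σ (i - 2)) → ∃ u ∈ U, u ∈ σ i)))) := by
  constructor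
  · rintro ⟨h0, hF⟩
    refine ⟨h0, fun i hi => ?_⟩
    refine ⟨fun hA => (hF i hi hA).1, ?_, ?_⟩
    · rintro ⟨hpos, hA⟩
      have hlt : i - 1 < n := by omega
      rcases (hF (i - 1) hlt hA).2 with heq | ⟨hno, _⟩
      · omega
      · have : i - 1 + 1 = i := by omega
        rwa [this] at hno
    · rintro ⟨hpos, hA⟩
      have hlt : i - 2 < n := by omega
      rcases (hF (i - 2) hlt hA).2 with heq | ⟨hno, h2⟩
      · omega
      · rcases h2 with heq2 | hAi
        · omega
        · have : i - 2 + 2 = i := by omega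
          rwa [this] at hAi
  · rintro ⟨h0, hP⟩
    refine ⟨h0, fun j hj hA => ?_⟩
    refine ⟨(hP j hj).1 hA, ?_⟩
    by_cases hlast : j = n - 1
    · exact Or.inl hlast
    · have hj1 : j + 1 < n := by omega
      have hno : ∀ u ∈ U, u ∉ σ (j + 1) := by
        have := (hP (j + 1) hj1).2.1
        simpa using this ⟨by omega, hA⟩
      refine Or.inr ⟨hno, ?_⟩
      by_cases hlast2 : j = n - 2
      · exact Or.inl hlast2
      · have hj2 : j + 2 < n := by omega
        refine Or.inr ?_
        have := (hP (j + 2) hj2).2.2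
        simpa using this ⟨by omega, hA⟩
end

section
/- Pastification correctness for the controller-alternation formula simple_Con(C): for every finite trace σ = ⟨σ_0,…,σ_{n−1}⟩ with n ≥ 1 over a set Σ of propositions and every subset C ⊆ Σ, the forward condition [(∀ c ∈ C, c ∉ σ_0) and ∀ i < n, if (∀ c ∈ C, c ∉ σ_i) then (i = n−1 or ((∃ c ∈ C, c ∈ σ_{i+1}) and (∀ c, c' ∈ C with c ≠ c', ¬(c ∈ σ_{i+1} ∧ c' ∈ σ_{i+1})) and (i = n−2 or ∀ c ∈ C, c ∉ σ_{i+2})))] holds if and only if the past condition [(∀ c ∈ C, c ∉ σ_0) and ∀ i < n, ((i > 0 ∧ ∀ c ∈ C, c ∉ σ_{i−1}) → ((∃ c ∈ C, c ∈ σ_i) and ∀ c, c' ∈ C with c ≠ c', ¬(c ∈ σ_i ∧ c' ∈ σ_i))) and ((i > 1 ∧ ∀ c ∈ C, c ∉ σ_{i−2}) → ∀ c ∈ C, c ∉ σ_i)] holds. -/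
/-- Pastification correctness for the controller-alternation formula
`simple_Con(C)`: the forward semantics at position 0 iff the semantics of its
pure-past pastification at the last position `n-1`. -/
theorem simple_con_pastification {α : Type*} (n : ℕ) (hn : 1 ≤ n)
    (σ : ℕ → Set α) (C : Set α) :
    ((∀ c ∈ C, c ∉ σ 0) ∧
     (∀ i, i < n → ((∀ c ∈ C, c ∉ σ i) →
       (i = n - 1 ∨
         ((∃ c ∈ C, c ∈ σ (i + 1)) ∧
          (∀ c ∈ C, ∀ c' ∈ C, c ≠ c' → ¬ (c ∈ σ (i + 1) ∧ c' ∈ σ (i + 1))) ∧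
          (i = n - 2 ∨ ∀ c ∈ C, c ∉ σ (i + 2))))))) ↔
    ((∀ c ∈ C, c ∉ σ 0) ∧
     (∀ i, i < n →
       (((0 < i ∧ ∀ c ∈ C, c ∉ σ (i - 1)) →
          ((∃ c ∈ C, c ∈ σ i) ∧
           ∀ c ∈ C, ∀ c' ∈ C, c ≠ c' → ¬ (c ∈ σ i ∧ c' ∈ σ i))) ∧
        ((1 < i ∧ ∀ c ∈ C, c ∉ σ (i - 2)) → ∀ c ∈ C, c ∉ σ i)))) := by
  constructor
  · rintro ⟨h0, hf⟩
    refine ⟨h0, fun i hi => ⟨?_, ?_⟩⟩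
    · rintro ⟨hpos, hemp⟩
      have h := hf (i - 1) (by omega) hemp
      rcases h with h | ⟨h1, h2, _⟩
      · omega
      · have : i - 1 + 1 = i := by omega
        rw [this] at h1 h2
        exact ⟨h1, h2⟩
    · rintro ⟨hpos, hemp⟩
      have h := hf (i - 2) (by omega) hemp
      rcases h with h | ⟨_, _, h3⟩
      · omega
      · rcases h3 with h3 | h3
        · omega
        · have : i - 2 + 2 = i := by omega
          rwa [this] at h3
  · rintro ⟨h0, hp⟩
    refine ⟨h0, fun i hi hemp => ?_⟩
    by_cases he : i = n - 1
    · exact Or.inl he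
    · have hi1 : i + 1 < n := by omega
      have h1 := (hp (i + 1) hi1).1 ⟨by omega, by simpa using hemp⟩
      refine Or.inr ⟨h1.1, h1.2, ?_⟩
      by_cases he2 : i = n - 2
      · exact Or.inl he2
      · have hi2 : i + 2 < n := by omega
        exact Or.inr ((hp (i + 2) hi2).2 ⟨by omega, by simpa using hemp⟩)
end
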